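/- For every n ≥ 1, φ(M_{2n+1})·0 = M_{2n+2} and φ(M_{2n+2}) = 0·M_{2n+3}, where M_k are the minimal forbidden words of the Fibonacci word. -/

import Mathlib

/-- The Fibonacci morphism: `false` (=0) ↦ 01, `true` (=1) ↦ 0. -/
def phi (w : List Bool) : List Bool :=
  w.flatMap (fun b => if b then [false] else [false, true])

/-- The Fibonacci words: f₁ = 1, f₂ = 0, f_{n+2} = f_{n+1} f_n. -/
def fw : ℕ → List Bool
  | 0 => []
  | 1 => [true]
  | 2 => [false]
  | (n+3) => fw (n+2) ++ fw (n+1)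

/-- Palindromic prefix: f_n with its last two letters removed. -/
def pw (n : ℕ) : List Bool := (fw n).dropLast.dropLast

/-- Minimal forbidden words of the Fibonacci word:
`M_{2n+1} = 1 p_{2n+1} 1`, `M_{2n+2} = 0 p_{2n+2} 0`. -/
def Mw (n : ℕ) : List Bool :=
  if n % 2 = 0 then false :: (pw n ++ [false]) else true :: (pw n ++ [true])

/-- Correlation bit: `corr u v k` holds iff `C_{u,v}[k] = 1`. -/
def corr {α : Type*} (u v : List α) (k : ℕ) : Prop :=
  ∀ i j : ℕ, i < u.length → j < v.length → i = j + k → u[i]? = v[j]?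

/-- A border of a word is both a prefix and a suffix. -/
def IsBorder {α : Type*} (b w : List α) : Prop := b <+: w ∧ b <:+ w

/-- The set of nonempty borders of `M_n`. -/
def Bset (n : ℕ) : Set (List Bool) := {b | b ≠ [] ∧ IsBorder b (Mw n)}

open scoped Classical in
/-- The correlation polynomial `C_{u,v}(z) = ∑_{k<|u|} C_{u,v}[k] z^{|u|-1-k}`. -/
noncomputable def corrPoly (u v : List Bool) : Polynomial ℤ :=
  ∑ k ∈ Finset.range u.length,
    if corr u v k then Polynomial.X ^ (u.length - 1 - k) else 0

open scoped Classical in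
/-- The nonempty borders of `w`, as a finset. -/
noncomputable def borderFinset (w : List Bool) : Finset (List Bool) :=
  ((Finset.range (w.length + 1)).image (fun k => w.take k)).filter
    (fun b => b ≠ [] ∧ b <:+ w)

lemma phi_append (a b : List Bool) : phi (a ++ b) = phi a ++ phi b :=
  List.flatMap_append

lemma fw_succ (n : ℕ) : fw (n+3) = fw (n+2) ++ fw (n+1) := rfl

lemma phi_fw : ∀ n, phi (fw (n+1)) = fw (n+2)
  | 0 => rfl
  | 1 => rfl
  | (n+2) => by
      show phi (fw (n+2) ++ fw (n+1)) = fw (n+3) ++ fw (n+2)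
      rw [phi_append, phi_fw (n+1), phi_fw n]

lemma fw_last : ∀ n, ∃ p, fw (n+3) = p ++ (if n % 2 = 0 then [false, true] else [true, false])
  | 0 => ⟨[], rfl⟩
  | 1 => ⟨[false], rfl⟩
  | (n+2) => by
      obtain ⟨p, hp⟩ := fw_last n
      refine ⟨fw (n+4) ++ p, ?_⟩
      have h2 : (n+2) % 2 = n % 2 := by omega
      rw [show n+2+3 = (n+2)+3 from rfl, fw_succ, h2, show n+2+2 = n+4 from rfl, hp,
        List.append_assoc]

lemma dropLast2 (p : List Bool) (a b : Bool) : (p ++ [a, b]).dropLast.dropLast = p := by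
  rw [show p ++ [a, b] = (p ++ [a]) ++ [b] by simp, List.dropLast_concat, List.dropLast_concat]

theorem stmt6 (n : ℕ) (hn : 1 ≤ n) :
    phi (Mw (2*n+1)) ++ [false] = Mw (2*n+2) ∧
    phi (Mw (2*n+2)) = false :: Mw (2*n+3) := by
  obtain ⟨k, rfl⟩ : ∃ k, n = k + 1 := ⟨n - 1, by omega⟩
  obtain ⟨p, hp⟩ := fw_last (2*k)
  obtain ⟨q, hq⟩ := fw_last (2*k+1)
  obtain ⟨r, hr⟩ := fw_last (2*k+2)
  rw [show (2*k) % 2 = 0 by omega, if_pos rfl] at hp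
  rw [show (2*k+1) % 2 = 1 by omega] at hq; simp only [if_neg (by omega : ¬ (1:ℕ) = 0)] at hq
  rw [show (2*k+2) % 2 = 0 by omega, if_pos rfl] at hr
  have e1 : 2*(k+1)+1 = 2*k+3 := by ring
  have e2 : 2*(k+1)+2 = (2*k+1)+3 := by ring
  have e3 : 2*(k+1)+3 = (2*k+2)+3 := by ring
  have hp1 : pw (2*k+3) = p := by rw [pw, hp, dropLast2]
  have hq1 : pw ((2*k+1)+3) = q := by rw [pw, hq, dropLast2]
  have hr1 : pw ((2*k+2)+3) = r := by rw [pw, hr, dropLast2]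
  -- key relations via phi_fw
  have key1 : phi p ++ [false] = q := by
    have := phi_fw (2*k+2)
    rw [show 2*k+2+1 = 2*k+3 from rfl, hp, show 2*k+2+2 = (2*k+1)+3 from rfl, hq,
      phi_append] at this
    have : (phi p ++ [false]) ++ [true, false] = q ++ [true, false] := by
      simpa [phi, List.append_assoc] using this
    exact List.append_cancel_right this
  have key2 : phi q ++ [false] = r := by
    have := phi_fw (2*k+3)
    rw [show 2*k+3+1 = (2*k+1)+3 from rfl, hq, show 2*k+3+2 = (2*k+2)+3 from rfl, hr,
      phi_append] at this
    have : (phi q ++ [false]) ++ [false, true] = r ++ [false, true] := by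
      simpa [phi, List.append_assoc] using this
    exact List.append_cancel_right this
  constructor
  · rw [e1, e2, Mw, Mw, if_neg (by omega : ¬ (2*k+3) % 2 = 0),
      if_pos (by omega : ((2*k+1)+3) % 2 = 0), hp1, hq1]
    simp only [phi, List.flatMap_cons, List.flatMap_append, if_pos rfl, ← key1]
    simp [phi, List.flatMap]
  · rw [e2, e3, Mw, Mw, if_pos (by omega : ((2*k+1)+3) % 2 = 0),
      if_neg (by omega : ¬ ((2*k+2)+3) % 2 = 0), hq1, hr1]
    simp only [phi, List.flatMap_cons, List.flatMap_append, ← key2]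
    simp [phi, List.flatMap]
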